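/- arXiv:1603.05236 — 2 statements merged into one kernel-verified Lean document; each statement's English description precedes it below -/
import Mathlib

section
/- Let (X,d) be a length metric space, let x, y ∈ X be distinct points, and let 0 < r < d(x,y). Assume that the closed ball of radius 2r around x is compact. Then there exists a point z ∈ X with d(x,z) = r and d(x,z) + d(z,y) = d(x,y). -/
/-- A metric space is a *length space* if the distance between any two points equals the
infimum of the lengths of continuous paths joining them. -/
def IsLengthSpace (X : Type*) [MetricSpace X] : Prop :=
  ∀ x y : X, ENNReal.ofReal (dist x y) = ⨅ γ : Path x y, eVariationOn (fun t => γ t) Set.univ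

open unitInterval Filter Topology in
lemma path_split_aux {X : Type*} [MetricSpace X] {x y : X} (γ : Path x y) (t : I) :
    edist x (γ t) + edist (γ t) y ≤ eVariationOn (fun s => γ s) Set.univ := by
  have key := eVariationOn.Icc_add_Icc (f := fun s => γ s) (s := (Set.univ : Set I))
    (unitInterval.nonneg' : (0:I) ≤ t) (unitInterval.le_one' : t ≤ 1) (Set.mem_univ t)
  have huniv : (Set.univ : Set I) ∩ Set.Icc 0 1 = Set.univ := by
    ext s
    simp [Set.mem_Icc, (unitInterval.nonneg' : (0:I) ≤ s), (unitInterval.le_one' : s ≤ 1)]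
  have h1 : edist x (γ t) ≤ eVariationOn (fun s => γ s) (Set.univ ∩ Set.Icc 0 t) := by
    have := eVariationOn.edist_le (fun s => γ s)
      (s := Set.univ ∩ Set.Icc 0 t) (x := (0 : I)) (y := t)
      ⟨trivial, Set.left_mem_Icc.2 unitInterval.nonneg'⟩
      ⟨trivial, Set.right_mem_Icc.2 unitInterval.nonneg'⟩
    simpa [γ.source] using this
  have h2 : edist (γ t) y ≤ eVariationOn (fun s => γ s) (Set.univ ∩ Set.Icc t 1) := by
    have := eVariationOn.edist_le (fun s => γ s)
      (s := Set.univ ∩ Set.Icc t 1) (x := t) (y := (1 : I))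
      ⟨trivial, Set.left_mem_Icc.2 unitInterval.le_one'⟩
      ⟨trivial, Set.right_mem_Icc.2 unitInterval.le_one'⟩
    simpa [γ.target] using this
  calc edist x (γ t) + edist (γ t) y
      ≤ eVariationOn (fun s => γ s) (Set.univ ∩ Set.Icc 0 t)
        + eVariationOn (fun s => γ s) (Set.univ ∩ Set.Icc t 1) := add_le_add h1 h2
    _ = eVariationOn (fun s => γ s) (Set.univ ∩ Set.Icc 0 1) := key
    _ = eVariationOn (fun s => γ s) Set.univ := by rw [huniv]

open unitInterval Filter Topology in
theorem exists_intermediate_point_of_lengthSpace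
    {X : Type*} [MetricSpace X] (hX : IsLengthSpace X)
    (x y : X) (hxy : x ≠ y) (r : ℝ) (hr : 0 < r) (hrd : r < dist x y)
    (hcomp : IsCompact (Metric.closedBall x (2 * r))) :
    ∃ z : X, dist x z = r ∧ dist x z + dist z y = dist x y := by
  have key : ∀ ε : ℝ, 0 < ε → ∃ z : X, dist x z = r ∧ dist x z + dist z y ≤ dist x y + ε := by
    intro ε hε
    have hlt : (⨅ γ : Path x y, eVariationOn (fun t => γ t) Set.univ)
        < ENNReal.ofReal (dist x y) + ENNReal.ofReal ε := by
      rw [← hX x y]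
      exact ENNReal.lt_add_right (by simp) (by simp [hε, hε.ne'])
    obtain ⟨γ, hγ⟩ := iInf_lt_iff.1 hlt
    have hc : Continuous fun t : I => dist x (γ t) := continuous_const.dist γ.continuous
    have hmem : r ∈ Set.range fun t : I => dist x (γ t) := by
      apply intermediate_value_univ (0 : I) (1 : I) hc
      simp only [γ.source, γ.target, dist_self, Set.mem_Icc]
      exact ⟨hr.le, hrd.le⟩
    obtain ⟨t, ht⟩ := hmem
    refine ⟨γ t, ht, ?_⟩
    have h := (path_split_aux γ t).trans hγ.le
    rw [edist_dist, edist_dist, ← ENNReal.ofReal_add dist_nonneg dist_nonneg,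
      ← ENNReal.ofReal_add dist_nonneg hε.le] at h
    exact (ENNReal.ofReal_le_ofReal_iff (by positivity)).1 h
  choose f hf1 hf2 using fun n : ℕ => key (1 / ((n : ℝ) + 1)) (by positivity)
  have hmem : ∀ n, f n ∈ Metric.closedBall x (2 * r) := fun n => by
    simp only [Metric.mem_closedBall, dist_comm (f n) x, hf1 n]
    linarith
  obtain ⟨z, hz, φ, hφ, hconv⟩ := hcomp.tendsto_subseq hmem
  have h1 : Tendsto (fun n => dist x (f (φ n))) atTop (𝓝 (dist x z)) :=
    tendsto_const_nhds.dist hconv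
  have hdxz : dist x z = r := by
    refine tendsto_nhds_unique h1 ?_
    simpa [hf1] using tendsto_const_nhds (α := ℝ) (f := atTop (α := ℕ)) (a := r)
  have h2 : Tendsto (fun n => dist x (f (φ n)) + dist (f (φ n)) y) atTop
      (𝓝 (dist x z + dist z y)) := h1.add (hconv.dist tendsto_const_nhds)
  have h3 : Tendsto (fun n => dist x y + 1 / ((φ n : ℝ) + 1)) atTop (𝓝 (dist x y + 0)) := by
    refine tendsto_const_nhds.add ?_
    exact tendsto_one_div_add_atTop_nhds_zero_nat.comp (hφ.tendsto_atTop)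
  have hle : dist x z + dist z y ≤ dist x y + 0 :=
    le_of_tendsto_of_tendsto' h2 h3 fun n => hf2 (φ n)
  rw [add_zero] at hle
  exact ⟨z, hdxz, le_antisymm hle (dist_triangle x z y)⟩
end

section
/- Let (X,d) be a metric space equipped with a Borel measure μ, let x ∈ X, and suppose there is a constant C ≥ 1 such that μ(B(x,s)) ≤ C·e^{C·s} for all s > 0. Then for every T > 0 there is a constant C′ = C′(C,T) < ∞ such that for all 0 < t ≤ T and all r ≥ 1: ∫_{X ∖ B(x,r)} exp(−d(x,y)²/(2t)) dμ(y) ≤ C′ · exp(−r²/(4t)). -/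
open MeasureTheory Metric

theorem gaussian_tail_of_exponential_volume_growth
    {X : Type*} [MetricSpace X] [MeasurableSpace X] [OpensMeasurableSpace X]
    (μ : Measure X) (x : X) (C : ℝ) (hC : 1 ≤ C)
    (hvol : ∀ s : ℝ, 0 < s → μ (Metric.ball x s) ≤ ENNReal.ofReal (C * Real.exp (C * s)))
    (T : ℝ) (hT : 0 < T) :
    ∃ C' : ℝ, 0 < C' ∧ ∀ t : ℝ, 0 < t → t ≤ T → ∀ r : ℝ, 1 ≤ r →
      ∫⁻ y in (Metric.ball x r)ᶜ, ENNReal.ofReal (Real.exp (-(dist x y) ^ 2 / (2 * t))) ∂μ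
        ≤ ENNReal.ofReal (C' * Real.exp (-r ^ 2 / (4 * t))) := by
  set q : ℝ := Real.exp (-(1 / (8 * T))) with hq_def
  have hq0 : 0 < q := Real.exp_pos _
  have hq1 : q < 1 := by
    rw [hq_def]
    apply Real.exp_lt_one_iff.mpr
    have : (0:ℝ) < 1 / (8 * T) := by positivity
    linarith
  have h1q : 0 < 1 - q := by linarith
  set K : ℝ := C * Real.exp (C + 2 * T * C ^ 2) with hK_def
  have hK0 : 0 < K := by positivity
  refine ⟨K / (1 - q), by positivity, ?_⟩
  intro t ht htT r hr
  set A : ℕ → Set X := fun n => Metric.ball x (r + n + 1) \ Metric.ball x (r + n) with hA_def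
  -- complement of ball is contained in union of annuli
  have hsub : (Metric.ball x r)ᶜ ⊆ ⋃ n, A n := by
    intro y hy
    simp only [Set.mem_compl_iff, Metric.mem_ball, not_lt] at hy
    have hd : r ≤ dist x y := by rwa [dist_comm]
    have hd0 : 0 ≤ dist x y - r := by linarith
    refine Set.mem_iUnion.mpr ⟨⌊dist x y - r⌋₊, ?_⟩
    have hc : dist y x = dist x y := dist_comm y x
    constructor
    · have := Nat.lt_floor_add_one (dist x y - r)
      simp only [Metric.mem_ball, hc]
      linarith
    · have := Nat.floor_le hd0
      simp only [Metric.mem_ball, not_lt, hc]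
      linarith
  -- pointwise + volume bound on each annulus
  have hann : ∀ n : ℕ,
      ∫⁻ y in A n, ENNReal.ofReal (Real.exp (-(dist x y) ^ 2 / (2 * t))) ∂μ
        ≤ ENNReal.ofReal (C * Real.exp (C * (r + n + 1)) * Real.exp (-(r + n) ^ 2 / (2 * t))) := by
    intro n
    have hrn : (0:ℝ) ≤ r + n := by positivity
    have hstep : ∫⁻ y in A n, ENNReal.ofReal (Real.exp (-(dist x y) ^ 2 / (2 * t))) ∂μ
        ≤ ∫⁻ _ in A n, ENNReal.ofReal (Real.exp (-(r + n) ^ 2 / (2 * t))) ∂μ := by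
      apply setLIntegral_mono measurable_const
      intro y hy
      apply ENNReal.ofReal_le_ofReal
      apply Real.exp_le_exp.mpr
      have hy2 : ¬ dist y x < r + n := by
        have := hy.2
        simpa [Metric.mem_ball] using this
      have hdy : r + n ≤ dist x y := by rw [dist_comm]; linarith [not_lt.mp hy2]
      have hsq : (r + n) ^ 2 ≤ (dist x y) ^ 2 := by
        apply pow_le_pow_left₀ hrn hdy
      gcongr
    refine hstep.trans ?_
    rw [setLIntegral_const]
    have hvb : μ (A n) ≤ ENNReal.ofReal (C * Real.exp (C * (r + n + 1))) := by
      refine (measure_mono (Set.diff_subset)).trans ?_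
      exact hvol (r + n + 1) (by positivity)
    calc ENNReal.ofReal (Real.exp (-(r + n) ^ 2 / (2 * t))) * μ (A n)
        ≤ ENNReal.ofReal (Real.exp (-(r + n) ^ 2 / (2 * t))) *
            ENNReal.ofReal (C * Real.exp (C * (r + n + 1))) :=
          mul_le_mul_right hvb _
      _ = ENNReal.ofReal (C * Real.exp (C * (r + n + 1)) * Real.exp (-(r + n) ^ 2 / (2 * t))) := by
          rw [← ENNReal.ofReal_mul (Real.exp_nonneg _)]
          ring_nf
  -- real-number bound for each annulus term
  have hreal : ∀ n : ℕ,
      C * Real.exp (C * (r + n + 1)) * Real.exp (-(r + n) ^ 2 / (2 * t))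
        ≤ (K * Real.exp (-r ^ 2 / (4 * t))) * q ^ n := by
    intro n
    set s : ℝ := r + n with hs_def
    have hn0 : (0:ℝ) ≤ n := Nat.cast_nonneg n
    have hs1 : 1 ≤ s := by rw [hs_def]; linarith
    have hsr : r ≤ s := by rw [hs_def]; linarith
    have hsn : (n:ℝ) ≤ s ^ 2 := by nlinarith
    have hqn : q ^ n = Real.exp (-((n:ℝ) / (8 * T))) := by
      rw [hq_def, ← Real.exp_nat_mul]
      congr 1; field_simp
    have key : C * (s + 1) + -s ^ 2 / (2 * t) ≤
        (C + 2 * T * C ^ 2) + -r ^ 2 / (4 * t) + -((n:ℝ) / (8 * T)) := by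
      have hA1 : r ^ 2 / (4 * t) ≤ s ^ 2 / (4 * t) := by
        gcongr
      have hB1 : s ^ 2 / (4 * T) ≤ s ^ 2 / (4 * t) :=
        div_le_div_of_nonneg_left (by positivity) (by linarith) (by linarith)
      have hC1 : (n:ℝ) / (8 * T) ≤ s ^ 2 / (8 * T) := by gcongr
      have hD1 : C * s ≤ s ^ 2 / (8 * T) + 2 * T * C ^ 2 := by
        rw [← sub_nonneg]
        have heq : s ^ 2 / (8 * T) + 2 * T * C ^ 2 - C * s = (s - 4 * T * C) ^ 2 / (8 * T) := by
          field_simp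
          ring
        rw [heq]
        positivity
      have e1 : -s ^ 2 / (2 * t) = -(s ^ 2 / (4 * t)) - s ^ 2 / (4 * t) := by ring
      have e2 : -r ^ 2 / (4 * t) = -(r ^ 2 / (4 * t)) := by ring
      have e3 : s ^ 2 / (4 * T) = s ^ 2 / (8 * T) + s ^ 2 / (8 * T) := by ring
      rw [e1, e2]
      linarith
    have hC0 : (0:ℝ) ≤ C := by linarith
    rw [hqn, hK_def]
    calc C * Real.exp (C * (s + 1)) * Real.exp (-s ^ 2 / (2 * t))
        = C * Real.exp (C * (s + 1) + -s ^ 2 / (2 * t)) := by rw [Real.exp_add]; ring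
      _ ≤ C * Real.exp ((C + 2 * T * C ^ 2) + -r ^ 2 / (4 * t) + -((n:ℝ) / (8 * T))) :=
          mul_le_mul_of_nonneg_left (Real.exp_le_exp.mpr key) hC0
      _ = C * Real.exp (C + 2 * T * C ^ 2) * Real.exp (-r ^ 2 / (4 * t)) *
            Real.exp (-((n:ℝ) / (8 * T))) := by
          rw [Real.exp_add, Real.exp_add]; ring
  -- assemble
  calc ∫⁻ y in (Metric.ball x r)ᶜ, ENNReal.ofReal (Real.exp (-(dist x y) ^ 2 / (2 * t))) ∂μ
      ≤ ∫⁻ y in ⋃ n, A n, ENNReal.ofReal (Real.exp (-(dist x y) ^ 2 / (2 * t))) ∂μ :=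
        lintegral_mono_set hsub
    _ ≤ ∑' n, ∫⁻ y in A n, ENNReal.ofReal (Real.exp (-(dist x y) ^ 2 / (2 * t))) ∂μ :=
        lintegral_iUnion_le _ _
    _ ≤ ∑' n, ENNReal.ofReal ((K * Real.exp (-r ^ 2 / (4 * t))) * q ^ n) :=
        ENNReal.tsum_le_tsum fun n => (hann n).trans (ENNReal.ofReal_le_ofReal (hreal n))
    _ = ∑' n, ENNReal.ofReal (K * Real.exp (-r ^ 2 / (4 * t))) * (ENNReal.ofReal q) ^ n := by
        refine tsum_congr fun n => ?_
        rw [ENNReal.ofReal_mul (by positivity), ENNReal.ofReal_pow hq0.le]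
    _ = ENNReal.ofReal (K * Real.exp (-r ^ 2 / (4 * t))) * (1 - ENNReal.ofReal q)⁻¹ := by
        rw [ENNReal.tsum_mul_left, ENNReal.tsum_geometric]
    _ = ENNReal.ofReal (K / (1 - q) * Real.exp (-r ^ 2 / (4 * t))) := by
        rw [show (1 : ENNReal) - ENNReal.ofReal q = ENNReal.ofReal (1 - q) by
              rw [ENNReal.ofReal_sub _ hq0.le, ENNReal.ofReal_one],
            ← ENNReal.ofReal_inv_of_pos h1q,
            ← ENNReal.ofReal_mul (by positivity)]
        congr 1
        field_simp
end
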